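/- Suppose F = Σ_{j=1}^k π_j^0 N_p(μ_j^0, Σ_j^0) and π_1^0 = max_{1≤j≤k} π_j^0. Fix c' > 0 and let θ^a be the parameter with π_1 = 1, π_j = 0 for 2 ≤ j ≤ k, μ_1 = μ_1^0, Σ_1 = c'Σ_1^0, and μ_j, Σ_j arbitrary (symmetric positive definite) for j ≥ 2. Then L_β(θ^a, F) ≥ [ β (2π)^{pβ/2} (det(c'Σ_1^0))^{β/2} (1 + β/c')^{p/2} ]^{-1} · [ π_1^0 − (β/(1+β)^{1+p/2}) (1 + β/c')^{p/2} ]. -/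

import Mathlib

open MeasureTheory Matrix Filter Topology Finset Real

noncomputable section

/-- The `p`-variate normal density `φ_p(x, μ, Σ)`. -/
def mvnpdf (p : ℕ) (x μ : Fin p → ℝ) (S : Matrix (Fin p) (Fin p) ℝ) : ℝ :=
  (2 * π) ^ (-(p : ℝ) / 2) * S.det ^ (-(1 : ℝ) / 2) *
    Real.exp (-(1 / 2) * ((x - μ) ⬝ᵥ (S⁻¹ *ᵥ (x - μ))))

/-- A (generalized) mixture parameter `θ = (π₁,…,π_k, μ₁,…,μ_k, Σ₁,…,Σ_k)`. -/
abbrev MixParam (p k : ℕ) :=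
  (Fin k → ℝ) × (Fin k → Fin p → ℝ) × (Fin k → Matrix (Fin p) (Fin p) ℝ)

/-- `D_j(x, θ) = π_j φ_p(x, μ_j, Σ_j)`. -/
def Dj (p k : ℕ) (θ : MixParam p k) (x : Fin p → ℝ) (j : Fin k) : ℝ :=
  θ.1 j * mvnpdf p x (θ.2.1 j) (θ.2.2 j)

/-- `D_j(x,θ) = D(x,θ) = max_i D_i(x,θ)`, i.e. the `j`-th component attains the maximum. -/
def IsArgMax (p k : ℕ) (θ : MixParam p k) (x : Fin p → ℝ) (j : Fin k) : Prop :=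
  ∀ i, Dj p k θ x i ≤ Dj p k θ x j

open Classical in
/-- The assignment function `Z_j(x,θ) = 1{D_j(x,θ) = D(x,θ)}`. -/
def Zj (p k : ℕ) (θ : MixParam p k) (x : Fin p → ℝ) (j : Fin k) : ℝ :=
  if IsArgMax p k θ x j then 1 else 0

/-- `∫_{ℝ^p} φ_p(x, μ, Σ)^{1+β} dx`. -/
def Jint (p : ℕ) (β : ℝ) (μ : Fin p → ℝ) (S : Matrix (Fin p) (Fin p) ℝ) : ℝ :=
  ∫ x : Fin p → ℝ, mvnpdf p x μ S ^ (1 + β)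

open Classical in
/-- The integrand `m_θ(x)` of the pseudo β-likelihood, with the convention that a summand
is `0` whenever `Z_j(x,θ) = 0`. -/
def mfun (p k : ℕ) (β : ℝ) (θ : MixParam p k) (x : Fin p → ℝ) : ℝ :=
  ∑ j : Fin k,
    if IsArgMax p k θ x j then
      Real.log (θ.1 j) + (1 / β) * mvnpdf p x (θ.2.1 j) (θ.2.2 j) ^ β
        - (1 / (1 + β)) * Jint p β (θ.2.1 j) (θ.2.2 j)
    else 0

/-- The pseudo β-likelihood `L_β(θ, P) = E_P[m_θ(X)]`. -/
def Lbeta (p k : ℕ) (β : ℝ) (θ : MixParam p k) (P : Measure (Fin p → ℝ)) : ℝ :=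
  ∫ x, mfun p k β θ x ∂P

/-- The empirical pseudo β-likelihood `L_β(θ, F_n)` based on observations `xs 0, …, xs (n-1)`. -/
def Lemp (p k : ℕ) (β : ℝ) (θ : MixParam p k) (n : ℕ) (xs : ℕ → Fin p → ℝ) : ℝ :=
  (1 / (n : ℝ)) * ∑ i ∈ Finset.range n, mfun p k β θ (xs i)

/-- `θ` is a genuine mixture parameter: weights in `[0,1]` summing to `1`, and symmetric
positive definite dispersion matrices. -/
def IsMixParam (p k : ℕ) (θ : MixParam p k) : Prop :=
  (∀ j, 0 ≤ θ.1 j ∧ θ.1 j ≤ 1) ∧ (∑ j, θ.1 j) = 1 ∧ ∀ j, (θ.2.2 j).PosDef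

/-- The constrained parameter space `Θ_C`: every eigenvalue of every `Σ_j` is at least `c₁`
(NS constraint) and the ratio of any two eigenvalues is at most `c` (ER constraint `M/m ≤ c`). -/
def InThetaC (p k : ℕ) (c c₁ : ℝ) (θ : MixParam p k) : Prop :=
  IsMixParam p k θ ∧
    (∀ j (h : (θ.2.2 j).IsHermitian) i, c₁ ≤ h.eigenvalues i) ∧
    (∀ j (h : (θ.2.2 j).IsHermitian) i j' (h' : (θ.2.2 j').IsHermitian) i',
      h.eigenvalues i ≤ c * h'.eigenvalues i')

/-- The `k`-component `p`-variate normal mixture measure `Σ_j w_j N_p(μ_j, Σ_j)`. -/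
def mixMeasure (p k : ℕ) (w : Fin k → ℝ) (μ : Fin k → Fin p → ℝ)
    (S : Fin k → Matrix (Fin p) (Fin p) ℝ) : Measure (Fin p → ℝ) :=
  volume.withDensity fun x => ENNReal.ofReal (∑ j, w j * mvnpdf p x (μ j) (S j))

/-- Assumption 1: `max_j π⁰_j ≥ (1+k⁰) β/(1+β)^{1+p/2}` for some `k⁰ > 0`. -/
def Assumption1 (p k : ℕ) (β : ℝ) (w0 : Fin k → ℝ) : Prop :=
  ∃ k0 > 0, ∃ j0 : Fin k, (∀ j, w0 j ≤ w0 j0) ∧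
    (1 + k0) * β / (1 + β) ^ (1 + (p : ℝ) / 2) ≤ w0 j0

/-- The Euclidean distance on the parameter space
`ℝ^k × (ℝ^p)^k × (ℝ^{p×p})^k`. -/
def paramDist (p k : ℕ) (θ θ' : MixParam p k) : ℝ :=
  Real.sqrt ((∑ j, (θ.1 j - θ'.1 j) ^ 2) + (∑ j, ∑ i, (θ.2.1 j i - θ'.2.1 j i) ^ 2)
    + (∑ j, ∑ i, ∑ i', (θ.2.2 j i i' - θ'.2.2 j i i') ^ 2))

end

noncomputable section
namespace BL


variable {p : ℕ}

lemma dot_self_eq (v : Fin p → ℝ) : v ⬝ᵥ v = ∑ i, (v i) ^ 2 := by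
  simp [dotProduct, pow_two]

lemma integrable_iso {r : ℝ} (hr : 0 < r) :
    Integrable (fun v : Fin p → ℝ => Real.exp (-r * (v ⬝ᵥ v))) := by
  have h : (fun v : Fin p → ℝ => Real.exp (-r * (v ⬝ᵥ v)))
      = fun v => ∏ i, Real.exp (-r * (v i) ^ 2) := by
    funext v
    rw [← Real.exp_sum, dot_self_eq, Finset.mul_sum]
  rw [h]
  exact MeasureTheory.Integrable.fintype_prod (𝕜 := ℝ)
    (fun i => integrable_exp_neg_mul_sq hr)

lemma integral_iso {r : ℝ} (hr : 0 < r) :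
    ∫ v : Fin p → ℝ, Real.exp (-r * (v ⬝ᵥ v)) = (π / r) ^ ((p : ℝ) / 2) := by
  have h : (fun v : Fin p → ℝ => Real.exp (-r * (v ⬝ᵥ v)))
      = fun v => ∏ i, Real.exp (-r * (v i) ^ 2) := by
    funext v
    rw [← Real.exp_sum, dot_self_eq, Finset.mul_sum]
  rw [h, MeasureTheory.volume_pi, MeasureTheory.integral_fintype_prod_eq_pow (ι := Fin p)
    (fun t : ℝ => Real.exp (-r * t ^ 2)), integral_gaussian,
    Real.sqrt_eq_rpow, Fintype.card_fin, ← Real.rpow_natCast ((π / r) ^ ((1:ℝ)/2)) p,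
    ← Real.rpow_mul (by positivity)]
  ring_nf

variable {S : Matrix (Fin p) (Fin p) ℝ}

lemma posDef_smul (hS : S.PosDef) {c : ℝ} (hc : 0 < c) : (c • S).PosDef := by
  constructor
  · have h := hS.1
    unfold Matrix.IsHermitian at *
    rw [Matrix.conjTranspose_smul, h, star_trivial]
  · exact (hS.smul hc).2

lemma quad_nonneg (hS : S.PosDef) (v : Fin p → ℝ) : 0 ≤ v ⬝ᵥ (S⁻¹ *ᵥ v) := by
  have h := hS.inv.posSemidef.dotProduct_mulVec_nonneg v
  simpa using h

open scoped MatrixOrder in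
def msqrt (S : Matrix (Fin p) (Fin p) ℝ) : Matrix (Fin p) (Fin p) ℝ := CFC.sqrt S

open scoped MatrixOrder in
lemma msqrt_mul_self (hS : S.PosDef) : msqrt S * msqrt S = S :=
  CFC.sqrt_mul_sqrt_self S hS.posSemidef.nonneg

open scoped MatrixOrder in
lemma msqrt_posSemidef (S : Matrix (Fin p) (Fin p) ℝ) : (msqrt S).PosSemidef :=
  (CFC.sqrt_nonneg S).posSemidef

lemma sqrt_vec_quad (hS : S.PosDef) (v : Fin p → ℝ) :
    (msqrt S *ᵥ v) ⬝ᵥ (S⁻¹ *ᵥ (msqrt S *ᵥ v)) = v ⬝ᵥ v := by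
  set A := msqrt S with hA
  have hAA : A * A = S := msqrt_mul_self hS
  have hdet : IsUnit A.det := by
    have h2 : A.det * A.det = S.det := by rw [← Matrix.det_mul, hAA]
    have h0 : A.det ≠ 0 := by
      intro h; rw [h, zero_mul] at h2; exact hS.det_pos.ne h2
    exact h0.isUnit
  have hAsymm : Aᵀ = A := by
    have h := (msqrt_posSemidef S).isHermitian
    simpa [Matrix.IsHermitian] using h
  have hSinv : S⁻¹ *ᵥ (A *ᵥ v) = A⁻¹ *ᵥ v := by
    rw [← hAA, Matrix.mul_inv_rev, Matrix.mulVec_mulVec, Matrix.mul_assoc,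
      Matrix.nonsing_inv_mul A hdet, Matrix.mul_one]
  rw [hSinv]
  have h2 : A *ᵥ v = v ᵥ* A := by rw [← Matrix.vecMul_transpose, hAsymm]
  rw [h2, ← Matrix.dotProduct_mulVec, Matrix.mulVec_mulVec,
    Matrix.mul_nonsing_inv A hdet, Matrix.one_mulVec]

lemma centered (hS : S.PosDef) {r : ℝ} (hr : 0 < r) :
    Integrable (fun x : Fin p → ℝ => Real.exp (-r * (x ⬝ᵥ (S⁻¹ *ᵥ x)))) ∧
    ∫ x : Fin p → ℝ, Real.exp (-r * (x ⬝ᵥ (S⁻¹ *ᵥ x)))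
      = (π / r) ^ ((p : ℝ) / 2) * Real.sqrt S.det := by
  classical
  set A := msqrt S with hA
  have hAA : A * A = S := msqrt_mul_self hS
  have hdet2 : A.det * A.det = S.det := by rw [← Matrix.det_mul, hAA]
  have h0 : A.det ≠ 0 := by
    intro h; apply hS.det_pos.ne; rw [← hdet2, h, zero_mul]
  set g : (Fin p → ℝ) → ℝ := fun x => Real.exp (-r * (x ⬝ᵥ (S⁻¹ *ᵥ x))) with hg
  have hqcont : Continuous fun x : Fin p → ℝ => x ⬝ᵥ (S⁻¹ *ᵥ x) := by
    have h : (fun x : Fin p → ℝ => x ⬝ᵥ (S⁻¹ *ᵥ x))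
        = fun x => ∑ i, x i * ∑ j, S⁻¹ i j * x j := by
      funext x; simp [dotProduct, Matrix.mulVec]
    rw [h]
    exact continuous_finset_sum _ fun i _ => (continuous_apply i).mul
      (continuous_finset_sum _ fun j _ => continuous_const.mul (continuous_apply j))
  have hgcont : Continuous g := Real.continuous_exp.comp (continuous_const.mul hqcont)
  have hTcont : Continuous (⇑(Matrix.toLin' A)) :=
    LinearMap.continuous_of_finiteDimensional _
  have hTmeas : AEMeasurable (⇑(Matrix.toLin' A)) volume :=
    hTcont.measurable.aemeasurable
  have hcomp : (fun v => g (Matrix.toLin' A v))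
      = fun v : Fin p → ℝ => Real.exp (-r * (v ⬝ᵥ v)) := by
    funext v
    rw [hg]
    simp only [Matrix.toLin'_apply]
    rw [sqrt_vec_quad hS v]
  have hmap : Measure.map (⇑(Matrix.toLin' A)) volume
      = ENNReal.ofReal |A.det|⁻¹ • volume := by
    have h := Real.map_matrix_volume_pi_eq_smul_volume_pi h0
    rwa [abs_inv] at h
  have hgsm : AEStronglyMeasurable g (Measure.map (⇑(Matrix.toLin' A)) volume) :=
    hgcont.aestronglyMeasurable
  have hint_comp : Integrable (fun v => g (Matrix.toLin' A v)) volume := by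
    rw [hcomp]; exact integrable_iso hr
  have hint_map : Integrable g (Measure.map (⇑(Matrix.toLin' A)) volume) :=
    (integrable_map_measure hgsm hTmeas).mpr hint_comp
  have habs : (0:ℝ) < |A.det| := abs_pos.mpr h0
  have hc0 : ENNReal.ofReal |A.det|⁻¹ ≠ 0 :=
    (ENNReal.ofReal_pos.mpr (inv_pos.mpr habs)).ne'
  have hint : Integrable g volume := by
    rw [hmap] at hint_map
    exact (integrable_smul_measure hc0 ENNReal.ofReal_ne_top).mp hint_map
  refine ⟨hint, ?_⟩
  have h1 : ∫ v, g (Matrix.toLin' A v) = ∫ x, g x ∂(Measure.map (⇑(Matrix.toLin' A)) volume) :=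
    (integral_map hTmeas hgsm).symm
  rw [hmap, integral_smul_measure, ENNReal.toReal_ofReal (by positivity), hcomp,
    integral_iso hr] at h1
  have hAdet_abs : |A.det| = Real.sqrt S.det := by
    rw [← hdet2, ← Real.sqrt_sq_eq_abs, pow_two]
  have := congrArg (fun t : ℝ => |A.det| * t) h1
  simp only [smul_eq_mul] at this h1 ⊢
  rw [← mul_assoc, mul_inv_cancel₀ habs.ne', one_mul] at this
  rw [← this, hAdet_abs, mul_comm]

lemma integrable_exp_quad (μ : Fin p → ℝ) (hS : S.PosDef) {r : ℝ} (hr : 0 < r) :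
    Integrable (fun x : Fin p → ℝ => Real.exp (-r * ((x - μ) ⬝ᵥ (S⁻¹ *ᵥ (x - μ))))) := by
  have h := (centered hS hr).1
  exact h.comp_sub_right μ

lemma integral_exp_quad (μ : Fin p → ℝ) (hS : S.PosDef) {r : ℝ} (hr : 0 < r) :
    ∫ x : Fin p → ℝ, Real.exp (-r * ((x - μ) ⬝ᵥ (S⁻¹ *ᵥ (x - μ))))
      = (π / r) ^ ((p : ℝ) / 2) * Real.sqrt S.det := by
  have h := MeasureTheory.integral_sub_right_eq_self (μ := (volume : Measure (Fin p → ℝ)))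
    (fun x : Fin p → ℝ => Real.exp (-r * (x ⬝ᵥ (S⁻¹ *ᵥ x)))) μ
  rw [h, (centered hS hr).2]



lemma two_pi_pos : (0:ℝ) < 2 * π := by positivity

lemma mvnpdf_pos {x μ : Fin p → ℝ} (hS : S.PosDef) : 0 < mvnpdf p x μ S := by
  unfold mvnpdf
  have h1 : (0:ℝ) < (2 * π) ^ (-(p : ℝ) / 2) := Real.rpow_pos_of_pos two_pi_pos _
  have h2 : (0:ℝ) < S.det ^ (-(1:ℝ) / 2) := Real.rpow_pos_of_pos hS.det_pos _
  positivity

lemma mvnpdf_continuous (μ : Fin p → ℝ) (S : Matrix (Fin p) (Fin p) ℝ) :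
    Continuous fun x => mvnpdf p x μ S := by
  unfold mvnpdf
  apply continuous_const.mul
  apply Real.continuous_exp.comp
  apply continuous_const.mul
  have h : (fun x : Fin p → ℝ => (x - μ) ⬝ᵥ (S⁻¹ *ᵥ (x - μ)))
      = fun x => ∑ i, (x i - μ i) * ∑ j, S⁻¹ i j * (x j - μ j) := by
    funext x; simp [dotProduct, Matrix.mulVec]
  rw [h]
  exact continuous_finset_sum _ fun i _ =>
    (((continuous_apply i).sub continuous_const).mul
      (continuous_finset_sum _ fun j _ =>
        continuous_const.mul ((continuous_apply j).sub continuous_const)))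

lemma mvnpdf_le {x μ : Fin p → ℝ} (hS : S.PosDef) :
    mvnpdf p x μ S ≤ (2 * π) ^ (-(p : ℝ) / 2) * S.det ^ (-(1:ℝ) / 2) := by
  unfold mvnpdf
  have h1 : Real.exp (-(1 / 2) * ((x - μ) ⬝ᵥ (S⁻¹ *ᵥ (x - μ)))) ≤ 1 := by
    apply Real.exp_le_one_iff.mpr
    have := quad_nonneg hS (x - μ)
    nlinarith
  have h2 : (0:ℝ) ≤ (2 * π) ^ (-(p : ℝ) / 2) * S.det ^ (-(1:ℝ) / 2) := by
    have := Real.rpow_pos_of_pos two_pi_pos (-(p : ℝ) / 2)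
    have := Real.rpow_pos_of_pos hS.det_pos (-(1:ℝ) / 2)
    positivity
  calc (2 * π) ^ (-(p : ℝ) / 2) * S.det ^ (-(1:ℝ) / 2)
        * Real.exp (-(1 / 2) * ((x - μ) ⬝ᵥ (S⁻¹ *ᵥ (x - μ))))
      ≤ (2 * π) ^ (-(p : ℝ) / 2) * S.det ^ (-(1:ℝ) / 2) * 1 :=
        mul_le_mul_of_nonneg_left h1 h2
    _ = _ := mul_one _

lemma mvnpdf_rpow {x μ : Fin p → ℝ} (hS : S.PosDef) (t : ℝ) :
    mvnpdf p x μ S ^ t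
      = (2 * π) ^ (-((p : ℝ) * t) / 2) * S.det ^ (-t / 2)
        * Real.exp (-(t / 2) * ((x - μ) ⬝ᵥ (S⁻¹ *ᵥ (x - μ)))) := by
  unfold mvnpdf
  have h1 : (0:ℝ) ≤ (2 * π) ^ (-(p : ℝ) / 2) := (Real.rpow_pos_of_pos two_pi_pos _).le
  have h2 : (0:ℝ) ≤ S.det ^ (-(1:ℝ) / 2) := (Real.rpow_pos_of_pos hS.det_pos _).le
  rw [Real.mul_rpow (mul_nonneg h1 h2) (Real.exp_pos _).le, Real.mul_rpow h1 h2,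
    ← Real.rpow_mul two_pi_pos.le, ← Real.rpow_mul hS.det_pos.le, ← Real.exp_mul]
  congr 1
  · congr 1
    · congr 1; ring
    · congr 1; ring
  · congr 1; ring

lemma integral_mvnpdf_rpow (μ : Fin p → ℝ) (hS : S.PosDef) {t : ℝ} (ht : 0 < t) :
    ∫ x : Fin p → ℝ, mvnpdf p x μ S ^ t
      = (2 * π) ^ (((p : ℝ) * (1 - t)) / 2) * S.det ^ ((1 - t) / 2)
        * t ^ (-(p : ℝ) / 2) := by
  have ht2 : (0:ℝ) < t / 2 := by positivity
  simp_rw [mvnpdf_rpow hS t]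
  rw [MeasureTheory.integral_const_mul, integral_exp_quad μ hS ht2]
  have hπr : π / (t / 2) = 2 * π / t := by
    field_simp
  rw [hπr, Real.div_rpow two_pi_pos.le ht.le, Real.sqrt_eq_rpow]
  have e1 : (2 * π) ^ (-((p : ℝ) * t) / 2) * (2 * π) ^ ((p : ℝ) / 2)
      = (2 * π) ^ (((p : ℝ) * (1 - t)) / 2) := by
    rw [← Real.rpow_add two_pi_pos]; congr 1; ring
  have e2 : S.det ^ (-t / 2) * S.det ^ ((1:ℝ) / 2) = S.det ^ ((1 - t) / 2) := by
    rw [← Real.rpow_add hS.det_pos]; congr 1; ring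
  have e3 : t ^ (-(p : ℝ) / 2) = (t ^ ((p : ℝ) / 2))⁻¹ := by
    rw [← Real.rpow_neg ht.le]; congr 1; ring
  rw [e3, ← e1, ← e2]
  ring

lemma integrable_mvnpdf_rpow (μ : Fin p → ℝ) (hS : S.PosDef) {t : ℝ} (ht : 0 < t) :
    Integrable (fun x : Fin p → ℝ => mvnpdf p x μ S ^ t) := by
  have ht2 : (0:ℝ) < t / 2 := by positivity
  simp_rw [mvnpdf_rpow hS t]
  exact (integrable_exp_quad μ hS ht2).const_mul _

lemma integral_mvnpdf (μ : Fin p → ℝ) (hS : S.PosDef) :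
    ∫ x : Fin p → ℝ, mvnpdf p x μ S = 1 := by
  have h := integral_mvnpdf_rpow (S := S) μ hS (t := 1) one_pos
  simp_rw [Real.rpow_one] at h
  rw [h, show ((p : ℝ) * (1 - 1)) / 2 = 0 by ring, show ((1:ℝ) - 1) / 2 = 0 by ring,
    Real.rpow_zero, Real.rpow_zero, Real.one_rpow]
  norm_num

lemma integrable_mvnpdf (μ : Fin p → ℝ) (hS : S.PosDef) :
    Integrable (fun x : Fin p → ℝ => mvnpdf p x μ S) := by
  have h := integrable_mvnpdf_rpow (S := S) μ hS (t := 1) one_pos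
  simpa [Real.rpow_one] using h

lemma cross_integrable_integral (hS : S.PosDef) {c' β : ℝ} (hc' : 0 < c') (hβ : 0 < β)
    (μ : Fin p → ℝ) :
    Integrable (fun x : Fin p → ℝ => mvnpdf p x μ (c' • S) ^ β * mvnpdf p x μ S) ∧
    ∫ x : Fin p → ℝ, mvnpdf p x μ (c' • S) ^ β * mvnpdf p x μ S
      = (2 * π) ^ (-((p : ℝ) * β) / 2) * (c' • S).det ^ (-β / 2)
        * (1 + β / c') ^ (-(p : ℝ) / 2) := by
  have hSc : (c' • S).PosDef := posDef_smul hS hc'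
  have hE : (0:ℝ) < 1 + β / c' := by positivity
  have hr : (0:ℝ) < (1 + β / c') / 2 := by positivity
  have hinv : (c' • S)⁻¹ = c'⁻¹ • S⁻¹ := by
    apply Matrix.inv_eq_left_inv
    rw [Matrix.smul_mul, Matrix.mul_smul, Matrix.nonsing_inv_mul S (hS.det_pos.ne'.isUnit),
      smul_smul, inv_mul_cancel₀ hc'.ne', one_smul]
  have hpt : (fun x : Fin p → ℝ => mvnpdf p x μ (c' • S) ^ β * mvnpdf p x μ S)
      = fun x : Fin p → ℝ =>
        ((2 * π) ^ (-((p : ℝ) * β) / 2) * (c' • S).det ^ (-β / 2)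
          * ((2 * π) ^ (-(p : ℝ) / 2) * S.det ^ (-(1:ℝ) / 2)))
          * Real.exp (-((1 + β / c') / 2) * ((x - μ) ⬝ᵥ (S⁻¹ *ᵥ (x - μ)))) := by
    funext x
    rw [mvnpdf_rpow hSc β]
    unfold mvnpdf
    rw [hinv, Matrix.smul_mulVec, dotProduct_smul, smul_eq_mul]
    set q : ℝ := (x - μ) ⬝ᵥ (S⁻¹ *ᵥ (x - μ)) with hq
    have harg : -(β / 2) * (c'⁻¹ * q) + -(1 / 2) * q = -((1 + β / c') / 2) * q := by
      field_simp
      ring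
    calc (2 * π) ^ (-((p : ℝ) * β) / 2) * (c' • S).det ^ (-β / 2)
          * Real.exp (-(β / 2) * (c'⁻¹ * q))
          * ((2 * π) ^ (-(p : ℝ) / 2) * S.det ^ (-(1:ℝ) / 2) * Real.exp (-(1 / 2) * q))
        = ((2 * π) ^ (-((p : ℝ) * β) / 2) * (c' • S).det ^ (-β / 2)
          * ((2 * π) ^ (-(p : ℝ) / 2) * S.det ^ (-(1:ℝ) / 2)))
          * Real.exp (-(β / 2) * (c'⁻¹ * q) + -(1 / 2) * q) := by
          rw [Real.exp_add]; ring
      _ = _ := by rw [harg]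
  constructor
  · rw [hpt]
    exact (integrable_exp_quad μ hS hr).const_mul _
  · rw [hpt, MeasureTheory.integral_const_mul, integral_exp_quad μ hS hr]
    have hπr : π / ((1 + β / c') / 2) = 2 * π / (1 + β / c') := by
      field_simp
    rw [hπr, Real.div_rpow two_pi_pos.le hE.le, Real.sqrt_eq_rpow]
    have e1 : (2 * π) ^ (-(p : ℝ) / 2) * (2 * π) ^ ((p : ℝ) / 2) = 1 := by
      rw [← Real.rpow_add two_pi_pos, show (-(p : ℝ) / 2 + (p : ℝ) / 2) = 0 by ring,
        Real.rpow_zero]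
    have e2 : S.det ^ (-(1:ℝ) / 2) * S.det ^ ((1:ℝ) / 2) = 1 := by
      rw [← Real.rpow_add hS.det_pos, show (-(1:ℝ) / 2 + (1:ℝ) / 2) = 0 by ring,
        Real.rpow_zero]
    have e3 : (1 + β / c') ^ (-(p : ℝ) / 2) = ((1 + β / c') ^ ((p : ℝ) / 2))⁻¹ := by
      rw [show (-(p : ℝ) / 2) = -((p : ℝ) / 2) by ring, Real.rpow_neg hE.le]
    calc (2 * π) ^ (-((p : ℝ) * β) / 2) * (c' • S).det ^ (-β / 2)
          * ((2 * π) ^ (-(p : ℝ) / 2) * S.det ^ (-(1:ℝ) / 2))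
          * ((2 * π) ^ ((p : ℝ) / 2) / (1 + β / c') ^ ((p : ℝ) / 2) * S.det ^ ((1:ℝ) / 2))
        = (2 * π) ^ (-((p : ℝ) * β) / 2) * (c' • S).det ^ (-β / 2)
          * (((2 * π) ^ (-(p : ℝ) / 2) * (2 * π) ^ ((p : ℝ) / 2))
            * (S.det ^ (-(1:ℝ) / 2) * S.det ^ ((1:ℝ) / 2)))
          * ((1 + β / c') ^ ((p : ℝ) / 2))⁻¹ := by
          rw [div_eq_mul_inv]; ring
      _ = _ := by rw [e1, e2, ← e3, mul_one, mul_one]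


lemma key_arith {β b1 w X1 X2 X3 X4 : ℝ} (hβ : 0 < β) (hb1 : 0 < b1)
    (hX1 : 0 < X1) (hX2 : 0 < X2) (hX3 : 0 < X3) (hX4 : 0 < X4) :
    (β * X1 * X2 * X3)⁻¹ * (w - β / (b1 * X4) * X3)
      = (1 / β) * (w * (X1⁻¹ * X2⁻¹ * X3⁻¹)) - (1 / b1) * (X1⁻¹ * X2⁻¹ * X4⁻¹) := by
  field_simp

end BL
end


/-- lower bound on `L_β(θ^a, F)` for the degenerate parameter `θ^a` with
`π₁ = 1`, `μ₁ = μ₁⁰`, `Σ₁ = c'Σ₁⁰`. -/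
theorem Lbeta_theta_a_lower_bound
    (p k : ℕ) (hp : 0 < p) (hk : 0 < k) (β : ℝ) (hβ : 0 < β)
    (w0 : Fin k → ℝ) (mu0 : Fin k → Fin p → ℝ) (S0 : Fin k → Matrix (Fin p) (Fin p) ℝ)
    (hw0 : ∀ j, 0 ≤ w0 j ∧ w0 j ≤ 1) (hw0sum : (∑ j, w0 j) = 1)
    (hS0 : ∀ j, (S0 j).PosDef)
    -- the first component has the largest mixing weight: `π₁⁰ = max_j π_j⁰`
    (hmaxw : ∀ j, w0 j ≤ w0 ⟨0, hk⟩)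
    (c' : ℝ) (hc' : 0 < c')
    -- arbitrary remaining components of θ^a
    (muArb : Fin k → Fin p → ℝ) (SArb : Fin k → Matrix (Fin p) (Fin p) ℝ)
    (hSArb : ∀ j, (SArb j).PosDef) :
    (β * (2 * π) ^ ((p : ℝ) * β / 2) * (c' • S0 ⟨0, hk⟩).det ^ (β / 2) *
        (1 + β / c') ^ ((p : ℝ) / 2))⁻¹ *
      (w0 ⟨0, hk⟩ - β / (1 + β) ^ (1 + (p : ℝ) / 2) * (1 + β / c') ^ ((p : ℝ) / 2)) ≤
    Lbeta p k β
      (fun j => if j = ⟨0, hk⟩ then 1 else 0,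
       fun j => if j = ⟨0, hk⟩ then mu0 ⟨0, hk⟩ else muArb j,
       fun j => if j = ⟨0, hk⟩ then c' • S0 ⟨0, hk⟩ else SArb j)
      (mixMeasure p k w0 mu0 S0) := by
  classical
  have hπ := BL.two_pi_pos
  have h1β : (0:ℝ) < 1 + β := by positivity
  have hE : (0:ℝ) < 1 + β / c' := by positivity
  set j0 : Fin k := ⟨0, hk⟩ with hj0
  have hSa : (c' • S0 j0).PosDef := BL.posDef_smul (hS0 j0) hc'
  set θa : MixParam p k :=
    (fun j => if j = j0 then 1 else 0,
     fun j => if j = j0 then mu0 j0 else muArb j,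
     fun j => if j = j0 then c' • S0 j0 else SArb j) with hθa
  -- step 1 : simplify mfun
  have hmfun : ∀ x, mfun p k β θa x
      = (1 / β) * mvnpdf p x (mu0 j0) (c' • S0 j0) ^ β
        - (1 / (1 + β)) * Jint p β (mu0 j0) (c' • S0 j0) := by
    intro x
    have hφpos : 0 < mvnpdf p x (mu0 j0) (c' • S0 j0) := BL.mvnpdf_pos hSa
    have harg : IsArgMax p k θa x j0 := by
      intro i
      by_cases hi : i = j0
      · subst hi; exact le_refl _
      · show Dj p k θa x i ≤ Dj p k θa x j0
        simpa [Dj, hθa, hi] using hφpos.le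
    have hnotarg : ∀ j, j ≠ j0 → ¬ IsArgMax p k θa x j := by
      intro j hj hmax
      have h := hmax j0
      simp [Dj, hθa, hj] at h
      exact absurd h (not_le.mpr hφpos)
    unfold mfun
    rw [Finset.sum_eq_single j0]
    · rw [if_pos harg]
      simp [hθa]
    · intro b _ hb
      rw [if_neg (hnotarg b hb)]
    · intro h
      exact absurd (Finset.mem_univ j0) h
  -- step 2 : value of Jint
  have hJ : Jint p β (mu0 j0) (c' • S0 j0)
      = (2 * π) ^ (-((p : ℝ) * β) / 2) * (c' • S0 j0).det ^ (-β / 2)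
        * (1 + β) ^ (-(p : ℝ) / 2) := by
    unfold Jint
    rw [BL.integral_mvnpdf_rpow (mu0 j0) hSa (by positivity : (0:ℝ) < 1 + β),
      show ((p : ℝ) * (1 - (1 + β))) / 2 = -((p : ℝ) * β) / 2 by ring,
      show ((1:ℝ) - (1 + β)) / 2 = -β / 2 by ring]
  -- step 3 : the mixture density
  set dens : (Fin p → ℝ) → ℝ := fun x => ∑ j, w0 j * mvnpdf p x (mu0 j) (S0 j) with hdens
  have hdnn : ∀ x, 0 ≤ dens x := fun x =>
    Finset.sum_nonneg fun j _ => mul_nonneg (hw0 j).1 (BL.mvnpdf_pos (hS0 j)).le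
  have hdcont : Continuous dens := continuous_finset_sum _ fun j _ =>
    continuous_const.mul (BL.mvnpdf_continuous _ _)
  have hIP : ∀ f : (Fin p → ℝ) → ℝ,
      ∫ x, f x ∂(mixMeasure p k w0 mu0 S0) = ∫ x, dens x * f x := by
    intro f
    unfold mixMeasure
    have hmeas : Measurable fun x => (dens x).toNNReal := hdcont.measurable.real_toNNReal
    rw [show (fun x => ENNReal.ofReal (∑ j, w0 j * mvnpdf p x (mu0 j) (S0 j)))
        = fun x => (((dens x).toNNReal) : ENNReal) from rfl,
      integral_withDensity_eq_integral_smul hmeas f]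
    congr 1
    funext x
    rw [NNReal.smul_def, Real.coe_toNNReal _ (hdnn x), smul_eq_mul]
  -- step 4 : integrability facts
  have hφm : AEStronglyMeasurable
      (fun x : Fin p → ℝ => mvnpdf p x (mu0 j0) (c' • S0 j0) ^ β)
      (volume : Measure (Fin p → ℝ)) :=
    ((BL.mvnpdf_continuous (mu0 j0) (c' • S0 j0)).rpow_const
      (fun x => Or.inr hβ.le)).aestronglyMeasurable
  have hbd : ∃ C, ∀ x : Fin p → ℝ, ‖mvnpdf p x (mu0 j0) (c' • S0 j0) ^ β‖ ≤ C := by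
    refine ⟨((2 * π) ^ (-(p : ℝ) / 2) * (c' • S0 j0).det ^ (-(1:ℝ) / 2)) ^ β, fun x => ?_⟩
    rw [Real.norm_eq_abs, abs_of_nonneg (Real.rpow_nonneg (BL.mvnpdf_pos hSa).le β)]
    exact Real.rpow_le_rpow (BL.mvnpdf_pos hSa).le (BL.mvnpdf_le hSa) hβ.le
  have hterm : ∀ j : Fin k, Integrable (fun x : Fin p → ℝ =>
      mvnpdf p x (mu0 j0) (c' • S0 j0) ^ β * (w0 j * mvnpdf p x (mu0 j) (S0 j))) :=
    fun j => Integrable.bdd_mul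
      ((BL.integrable_mvnpdf (mu0 j) (hS0 j)).const_mul (w0 j)) hφm
        (Filter.Eventually.of_forall hbd.choose_spec)
  have hsum_eq : (fun x : Fin p → ℝ => dens x * mvnpdf p x (mu0 j0) (c' • S0 j0) ^ β)
      = fun x : Fin p → ℝ => ∑ j, mvnpdf p x (mu0 j0) (c' • S0 j0) ^ β
          * (w0 j * mvnpdf p x (mu0 j) (S0 j)) := by
    funext x
    rw [hdens, mul_comm, Finset.mul_sum]
  have hint1 : Integrable (fun x : Fin p → ℝ =>
      dens x * mvnpdf p x (mu0 j0) (c' • S0 j0) ^ β) := by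
    rw [hsum_eq]
    exact integrable_finset_sum _ fun j _ => hterm j
  have hdint : Integrable dens := by
    rw [hdens]
    exact integrable_finset_sum _ fun j _ =>
      (BL.integrable_mvnpdf (mu0 j) (hS0 j)).const_mul (w0 j)
  have hdens_val : ∫ x, dens x = 1 := by
    rw [hdens, MeasureTheory.integral_finset_sum _ (fun j _ =>
      (BL.integrable_mvnpdf (mu0 j) (hS0 j)).const_mul (w0 j))]
    have h : ∀ j ∈ Finset.univ, (∫ x : Fin p → ℝ, w0 j * mvnpdf p x (mu0 j) (S0 j)) = w0 j := by
      intro j _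
      rw [MeasureTheory.integral_const_mul, BL.integral_mvnpdf (mu0 j) (hS0 j), mul_one]
    rw [Finset.sum_congr rfl h, hw0sum]
  -- step 5 : Lbeta in closed form
  have hLb2 : Lbeta p k β θa (mixMeasure p k w0 mu0 S0)
      = (1 / β) * (∫ x, dens x * mvnpdf p x (mu0 j0) (c' • S0 j0) ^ β)
        - (1 / (1 + β)) * Jint p β (mu0 j0) (c' • S0 j0) := by
    unfold Lbeta
    rw [hIP]
    have hpt : (fun x => dens x * mfun p k β θa x)
        = fun x => (1 / β) * (dens x * mvnpdf p x (mu0 j0) (c' • S0 j0) ^ β)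
          - ((1 / (1 + β)) * Jint p β (mu0 j0) (c' • S0 j0)) * dens x := by
      funext x
      rw [hmfun x]
      ring
    rw [hpt, MeasureTheory.integral_sub (hint1.const_mul _) (hdint.const_mul _),
      MeasureTheory.integral_const_mul, MeasureTheory.integral_const_mul, hdens_val, mul_one]
  -- step 6 : lower bound for the main integral
  have hcross := BL.cross_integrable_integral (hS0 j0) hc' hβ (mu0 j0)
  have hptle : ∀ x : Fin p → ℝ,
      w0 j0 * (mvnpdf p x (mu0 j0) (c' • S0 j0) ^ β * mvnpdf p x (mu0 j0) (S0 j0))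
        ≤ dens x * mvnpdf p x (mu0 j0) (c' • S0 j0) ^ β := by
    intro x
    have h1 : w0 j0 * mvnpdf p x (mu0 j0) (S0 j0) ≤ dens x := by
      rw [hdens]
      exact Finset.single_le_sum
        (f := fun j => w0 j * mvnpdf p x (mu0 j) (S0 j))
        (fun j _ => mul_nonneg (hw0 j).1 (BL.mvnpdf_pos (hS0 j)).le) (Finset.mem_univ j0)
    have h2 : 0 ≤ mvnpdf p x (mu0 j0) (c' • S0 j0) ^ β :=
      Real.rpow_nonneg (BL.mvnpdf_pos hSa).le β
    calc w0 j0 * (mvnpdf p x (mu0 j0) (c' • S0 j0) ^ β * mvnpdf p x (mu0 j0) (S0 j0))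
        = (w0 j0 * mvnpdf p x (mu0 j0) (S0 j0)) * mvnpdf p x (mu0 j0) (c' • S0 j0) ^ β := by
          ring
      _ ≤ dens x * mvnpdf p x (mu0 j0) (c' • S0 j0) ^ β :=
          mul_le_mul_of_nonneg_right h1 h2
  have hlow : w0 j0 * ((2 * π) ^ (-((p : ℝ) * β) / 2) * (c' • S0 j0).det ^ (-β / 2)
      * (1 + β / c') ^ (-(p : ℝ) / 2))
      ≤ ∫ x, dens x * mvnpdf p x (mu0 j0) (c' • S0 j0) ^ β := by
    rw [← hcross.2, ← MeasureTheory.integral_const_mul]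
    exact MeasureTheory.integral_mono (hcross.1.const_mul _) hint1 hptle
  -- step 7 : final arithmetic
  have hD := hSa.det_pos
  have hne1 : (2 * π) ^ ((p : ℝ) * β / 2) ≠ 0 := (Real.rpow_pos_of_pos hπ _).ne'
  have hne2 : (c' • S0 j0).det ^ (β / 2) ≠ 0 := (Real.rpow_pos_of_pos hD _).ne'
  have hne3 : (1 + β / c') ^ ((p : ℝ) / 2) ≠ 0 := (Real.rpow_pos_of_pos hE _).ne'
  have hne4 : (1 + β) ^ ((p : ℝ) / 2) ≠ 0 := (Real.rpow_pos_of_pos h1β _).ne'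
  have hkey : (β * (2 * π) ^ ((p : ℝ) * β / 2) * (c' • S0 j0).det ^ (β / 2) *
        (1 + β / c') ^ ((p : ℝ) / 2))⁻¹ *
      (w0 j0 - β / (1 + β) ^ (1 + (p : ℝ) / 2) * (1 + β / c') ^ ((p : ℝ) / 2))
      = (1 / β) * (w0 j0 * ((2 * π) ^ (-((p : ℝ) * β) / 2) * (c' • S0 j0).det ^ (-β / 2)
          * (1 + β / c') ^ (-(p : ℝ) / 2)))
        - (1 / (1 + β)) * ((2 * π) ^ (-((p : ℝ) * β) / 2) * (c' • S0 j0).det ^ (-β / 2)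
          * (1 + β) ^ (-(p : ℝ) / 2)) := by
    rw [show (-((p : ℝ) * β) / 2) = -((p : ℝ) * β / 2) by ring,
      show (-β / 2 : ℝ) = -(β / 2) by ring,
      show (-(p : ℝ) / 2) = -((p : ℝ) / 2) by ring,
      Real.rpow_neg hπ.le, Real.rpow_neg hD.le, Real.rpow_neg hE.le, Real.rpow_neg h1β.le,
      Real.rpow_add h1β, Real.rpow_one]
    exact BL.key_arith hβ h1β (Real.rpow_pos_of_pos hπ _) (Real.rpow_pos_of_pos hD _)
      (Real.rpow_pos_of_pos hE _) (Real.rpow_pos_of_pos h1β _)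
  rw [hLb2, hJ, hkey]
  have hmul := mul_le_mul_of_nonneg_left hlow (le_of_lt (show (0:ℝ) < 1 / β by positivity))
  linarith
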